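/- Let p be a prime number, b' a natural number, and b'' a natural number with b'' < p. Then for every integer n, C(n, p·b')·C(n, b'') is congruent to C(n, p·b' + b'') modulo p. -/

import Mathlib

open Finset in
lemma ring_choose_add_pow_congr (p : ℕ) (hp : p.Prime) (M k : ℕ) (hk : k < p ^ M) (n : ℤ) :
    ((Ring.choose (n + (p ^ M : ℕ)) k : ℤ) : ZMod p) = ((Ring.choose n k : ℤ) : ZMod p) := by
  rw [Ring.add_choose_eq k (Commute.all _ _)]
  push_cast
  rw [Finset.sum_eq_single (k, 0)]
  · simp [Ring.choose_natCast]
  · rintro ⟨i, j⟩ hij hne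
    have hsum : i + j = k := by simpa using hij
    have hj : j ≠ 0 := by
      rintro rfl
      exact hne (by simp [← hsum])
    have hjk : j ≠ p ^ M := by
      have : j ≤ k := by omega
      omega
    have hc : ((Ring.choose ((p : ℤ) ^ M) j : ℤ) : ZMod p) = 0 := by
      rw [← Nat.cast_pow, Ring.choose_natCast]
      push_cast
      exact_mod_cast (ZMod.natCast_eq_zero_iff _ _).mpr (hp.dvd_choose_pow hj hjk)
    simp [hc]
  · intro h
    exact absurd (by simp) h

lemma ring_choose_add_mul_pow_congr (p : ℕ) (hp : p.Prime) (M k : ℕ) (hk : k < p ^ M)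
    (n : ℤ) (c : ℕ) :
    ((Ring.choose (n + c * (p ^ M : ℕ)) k : ℤ) : ZMod p) = ((Ring.choose n k : ℤ) : ZMod p) := by
  induction c with
  | zero => simp
  | succ c ih =>
    have : n + (c + 1 : ℕ) * (p ^ M : ℕ) = (n + c * (p ^ M : ℕ)) + (p ^ M : ℕ) := by
      push_cast; ring
    rw [this, ring_choose_add_pow_congr p hp M k hk, ih]

lemma nat_lucas_step (p : ℕ) (hp : p.Prime) (b' b'' : ℕ) (hb'' : b'' < p) (N : ℕ) :
    ((N.choose (p * b') * N.choose b'' : ℤ) : ZMod p) =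
      ((N.choose (p * b' + b'') : ℤ) : ZMod p) := by
  haveI : Fact p.Prime := ⟨hp⟩
  have h1 := (ZMod.intCast_eq_intCast_iff _ _ _).mpr
    (Choose.choose_modEq_choose_mod_mul_choose_div (n := N) (k := p * b') (p := p))
  have h2 := (ZMod.intCast_eq_intCast_iff _ _ _).mpr
    (Choose.choose_modEq_choose_mod_mul_choose_div (n := N) (k := b'') (p := p))
  have h3 := (ZMod.intCast_eq_intCast_iff _ _ _).mpr
    (Choose.choose_modEq_choose_mod_mul_choose_div (n := N) (k := p * b' + b'') (p := p))
  have hpos : 0 < p := hp.pos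
  have e1 : p * b' % p = 0 := Nat.mul_mod_right p b'
  have e2 : p * b' / p = b' := Nat.mul_div_cancel_left _ hpos
  have e3 : (p * b' + b'') % p = b'' := by
    rw [Nat.mul_add_mod, Nat.mod_eq_of_lt hb'']
  have e4 : (p * b' + b'') / p = b' := by
    rw [Nat.mul_add_div hpos, Nat.div_eq_of_lt hb'', Nat.add_zero]
  have e5 : b'' % p = b'' := Nat.mod_eq_of_lt hb''
  have e6 : b'' / p = 0 := Nat.div_eq_of_lt hb''
  rw [e1, e2] at h1
  rw [e5, e6] at h2
  rw [e3, e4] at h3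
  push_cast at h1 h2 h3 ⊢
  simp only [Nat.choose_zero_right, Nat.cast_one, one_mul, mul_one] at h1 h2
  rw [h1, h2, h3]
  ring

/-- Let `p` be a prime number, `b'` a natural number, and `b''` a natural number
with `b'' < p`. Then for every integer `n`, `C(n, p·b')·C(n, b'')` is congruent to
`C(n, p·b' + b'')` modulo `p`. -/
theorem stmt5 (p : ℕ) (hp : p.Prime) (b' b'' : ℕ) (hb'' : b'' < p) (n : ℤ) :
    ((Ring.choose n (p * b') * Ring.choose n b'' : ℤ) : ZMod p) =
      ((Ring.choose n (p * b' + b'') : ℤ) : ZMod p) := by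
  set K := p * b' + b'' + 1 with hK
  have hlt : p * b' + b'' < p ^ K := by
    have := Nat.lt_pow_self (n := K) hp.one_lt
    omega
  set c := n.natAbs with hc
  have hnonneg : 0 ≤ n + c * (p ^ K : ℕ) := by
    have h0 : 1 ≤ p ^ K := Nat.one_le_iff_ne_zero.mpr (pow_ne_zero _ hp.pos.ne')
    have h1 : (1 : ℤ) ≤ ((p ^ K : ℕ) : ℤ) := by exact_mod_cast h0
    have h2 : (c : ℤ) ≤ (c : ℤ) * ((p ^ K : ℕ) : ℤ) := le_mul_of_one_le_right (by positivity) h1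
    have h3 : -n ≤ (c : ℤ) := by
      rw [hc]; exact (neg_le_abs n).trans_eq (Int.abs_eq_natAbs n)
    linarith
  set N := (n + c * (p ^ K : ℕ)).toNat with hN
  have hNe : (N : ℤ) = n + c * (p ^ K : ℕ) := Int.toNat_of_nonneg hnonneg
  have key : ∀ k : ℕ, k < p ^ K →
      ((Ring.choose n k : ℤ) : ZMod p) = ((N.choose k : ℤ) : ZMod p) := by
    intro k hk
    rw [← ring_choose_add_mul_pow_congr p hp K k hk n c, ← hNe, Ring.choose_natCast]
  rw [show ((Ring.choose n (p * b') * Ring.choose n b'' : ℤ) : ZMod p)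
      = ((Ring.choose n (p * b') : ℤ) : ZMod p) * ((Ring.choose n b'' : ℤ) : ZMod p) by
    push_cast; ring]
  rw [key (p * b') (by omega), key b'' (by omega), key (p * b' + b'') hlt]
  have := nat_lucas_step p hp b' b'' hb'' N
  push_cast at this ⊢
  rw [← this]
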